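/- Let G be a group with presentation G = F/R, F a free group. Then there is a natural isomorphism H₂(G, ℤ) ≅ (R ∩ [F,F]) / [F,R], where [F,R] is the subgroup generated by commutators f r f^{-1} r^{-1} with f ∈ F, r ∈ R. -/

import Mathlib

/-! Group homology `H₂(G, ℤ)` with trivial `ℤ`-coefficients, defined via the standard
(inhomogeneous) bar resolution, and Hopf's formula `H₂(G, ℤ) ≅ (R ∩ [F,F]) / [F,R]`
for a presentation `G = F/R` with `F` free. -/

/-- The group of `n`-chains of the bar complex of `G`: the free `ℤ`-module on `Gⁿ`. -/
abbrev barChains (G : Type) [Group G] (n : ℕ) : Type := (Fin n → G) →₀ ℤ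

/-- The `j`-th face map of the bar complex. -/
def barFace {G : Type} [Group G] {n : ℕ} (j : ℕ) (g : Fin (n + 1) → G) : Fin n → G :=
  fun i =>
    if i.val + 1 < j then g i.castSucc
    else if i.val + 1 = j then g i.castSucc * g i.succ
    else g i.succ

/-- The bar differential `d : C_{n+1}(G) → C_n(G)`. -/
noncomputable def barDiff (G : Type) [Group G] (n : ℕ) :
    barChains G (n + 1) →ₗ[ℤ] barChains G n :=
  (Finsupp.lift (barChains G n) ℤ (Fin (n + 1) → G))
    (fun g => ∑ j ∈ Finset.range (n + 2), Finsupp.single (barFace j g) ((-1 : ℤ) ^ j))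

/-- The second group homology `H₂(G, ℤ) = ker (d : C₂ → C₁) / im (d : C₃ → C₂)`. -/
abbrev H2 (G : Type) [Group G] : Type :=
  LinearMap.ker (barDiff G 1) ⧸
    Submodule.comap (LinearMap.ker (barDiff G 1)).subtype (LinearMap.range (barDiff G 2))

set_option linter.unusedSectionVars false
set_option linter.unnecessarySeqFocus false
set_option linter.unusedTactic false
set_option synthInstance.maxHeartbeats 1000000
set_option maxHeartbeats 2000000

namespace Hopf
open scoped commutatorElement
variable {G : Type} [Group G]

lemma eta2 (g : Fin 2 → G) : g = ![g 0, g 1] := by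
  funext i; fin_cases i <;> rfl

lemma barDiff_single₁ (g : Fin 2 → G) (c : ℤ) :
    barDiff G 1 (Finsupp.single g c) =
      Finsupp.single ![g 1] c - Finsupp.single ![g 0 * g 1] c + Finsupp.single ![g 0] c := by
  have h0 : barFace 0 g = ![g 1] := by funext i; fin_cases i <;> simp [barFace]
  have h1 : barFace 1 g = ![g 0 * g 1] := by funext i; fin_cases i <;> simp [barFace]
  have h2 : barFace 2 g = ![g 0] := by funext i; fin_cases i <;> simp [barFace]
  simp [barDiff, Finset.sum_range_succ, h0, h1, h2, Finsupp.smul_single,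
    sub_eq_add_neg, Finsupp.single_neg]

lemma barDiff_single₂ (g : Fin 3 → G) (c : ℤ) :
    barDiff G 2 (Finsupp.single g c) =
      Finsupp.single ![g 1, g 2] c - Finsupp.single ![g 0 * g 1, g 2] c
        + Finsupp.single ![g 0, g 1 * g 2] c - Finsupp.single ![g 0, g 1] c := by
  have h0 : barFace 0 g = ![g 1, g 2] := by funext i; fin_cases i <;> simp [barFace]
  have h1 : barFace 1 g = ![g 0 * g 1, g 2] := by funext i; fin_cases i <;> simp [barFace]
  have h2 : barFace 2 g = ![g 0, g 1 * g 2] := by funext i; fin_cases i <;> simp [barFace]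
  have h3 : barFace 3 g = ![g 0, g 1] := by funext i; fin_cases i <;> simp [barFace]
  simp [barDiff, Finset.sum_range_succ, h0, h1, h2, h3, Finsupp.smul_single,
    sub_eq_add_neg, Finsupp.single_neg]

lemma d_comp_d : (barDiff G 1).comp (barDiff G 2) = 0 := by
  refine Finsupp.lhom_ext fun g c => ?_
  simp only [LinearMap.comp_apply, LinearMap.zero_apply]
  rw [barDiff_single₂]
  simp only [map_add, map_sub, barDiff_single₁]
  simp [Matrix.cons_val_zero, Matrix.cons_val_one, mul_assoc]
  abel

/-- `C₂(G)` modulo boundaries from `C₃(G)`. -/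
abbrev Mq (G : Type) [Group G] : Type := barChains G 2 ⧸ LinearMap.range (barDiff G 2)

/-- class of the basis element `(g,h)` in `Mq`. -/
noncomputable def sc (g h : G) : Mq G := Submodule.Quotient.mk (Finsupp.single ![g, h] 1)

lemma cocycle (g h k : G) : sc h k + sc g (h * k) = sc (g * h) k + sc g h := by
  have this : Submodule.Quotient.mk (p := LinearMap.range (barDiff G 2))
      (barDiff G 2 (Finsupp.single ![g, h, k] 1)) = 0 :=
    (Submodule.Quotient.mk_eq_zero _).2 ⟨_, rfl⟩
  rw [barDiff_single₂] at this
  simp only [Matrix.cons_val_zero, Matrix.cons_val_one, Matrix.head_cons, Matrix.cons_val_two,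
    Matrix.tail_cons] at this
  have e : (Submodule.Quotient.mk (Finsupp.single ![h, k] 1) : Mq G)
      - Submodule.Quotient.mk (Finsupp.single ![g * h, k] 1)
      + Submodule.Quotient.mk (Finsupp.single ![g, h * k] 1)
      - Submodule.Quotient.mk (Finsupp.single ![g, h] 1) = 0 := by
    rw [← Submodule.Quotient.mk_sub, ← Submodule.Quotient.mk_add, ← Submodule.Quotient.mk_sub]
    exact this
  refine eq_of_sub_eq_zero ?_
  calc sc h k + sc g (h * k) - (sc (g * h) k + sc g h)
      = sc h k - sc (g * h) k + sc g (h * k) - sc g h := by abel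
    _ = 0 := e

lemma sc_one_right (g : G) : sc g 1 = sc (1 : G) 1 := by
  have h := cocycle g 1 1
  rw [one_mul, mul_one, add_comm (sc (1:G) 1) (sc g 1)] at h
  exact (add_left_cancel h).symm

lemma sc_one_left (k : G) : sc 1 k = sc (1 : G) 1 := by
  have h := cocycle 1 1 k
  rw [one_mul, one_mul] at h
  exact add_left_cancel h

lemma sc_inv (x : G) : sc x⁻¹ x = sc x x⁻¹ := by
  have h := cocycle x x⁻¹ x
  rw [inv_mul_cancel, mul_inv_cancel, sc_one_right x, sc_one_left x] at h
  exact add_right_cancel (h.trans (add_comm _ _))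

/-- The extension `E` of `G` by `Mq G` determined by the tautological cocycle `sc`. -/
structure Ext (G : Type) [Group G] where
  g : G
  m : Mq G

noncomputable instance : Mul (Ext G) := ⟨fun x y => ⟨x.g * y.g, x.m + y.m + sc x.g y.g⟩⟩
noncomputable instance : One (Ext G) := ⟨⟨1, -sc 1 1⟩⟩
noncomputable instance : Inv (Ext G) := ⟨fun x => ⟨x.g⁻¹, -x.m - sc x.g⁻¹ x.g - sc 1 1⟩⟩

lemma ext_mul_def (x y : Ext G) : x * y = ⟨x.g * y.g, x.m + y.m + sc x.g y.g⟩ := rfl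
lemma ext_one_def : (1 : Ext G) = ⟨1, -sc 1 1⟩ := rfl
lemma ext_inv_def (x : Ext G) : x⁻¹ = ⟨x.g⁻¹, -x.m - sc x.g⁻¹ x.g - sc 1 1⟩ := rfl

noncomputable instance : Group (Ext G) :=
  Group.ofLeftAxioms
    (fun a b c => by
      simp only [ext_mul_def]
      rw [mul_assoc]
      congr 1
      calc a.m + b.m + sc a.g b.g + c.m + sc (a.g * b.g) c.g
          = a.m + b.m + c.m + (sc (a.g * b.g) c.g + sc a.g b.g) := by abel
        _ = a.m + b.m + c.m + (sc b.g c.g + sc a.g (b.g * c.g)) := by rw [← cocycle]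
        _ = a.m + (b.m + c.m + sc b.g c.g) + sc a.g (b.g * c.g) := by abel)
    (fun a => by
      simp only [ext_mul_def, ext_one_def]
      rw [one_mul]
      have h2 : -sc 1 1 + a.m + sc 1 a.g = a.m := by rw [sc_one_left a.g]; abel
      rw [h2])
    (fun a => by
      simp only [ext_mul_def, ext_inv_def, ext_one_def]
      rw [inv_mul_cancel]
      congr 1
      abel)

lemma ext_central (a : Mq G) (x : Ext G) : x * ⟨1, a⟩ = (⟨1, a⟩ : Ext G) * x := by
  simp only [ext_mul_def, mul_one, one_mul]
  congr 1
  rw [sc_one_right x.g, sc_one_left x.g]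
  abel

lemma ext_central' {x y : Ext G} (h : y.g = 1) : Commute x y := by
  obtain ⟨yg, ym⟩ := y
  simp only at h
  subst h
  exact ext_central ym x

/-- projection `Ext G →* G`. -/
noncomputable def extFst : Ext G →* G where
  toFun := Ext.g
  map_one' := rfl
  map_mul' _ _ := rfl

/-- the induced differential on the quotient `Mq` -/
noncomputable def dbar : Mq G →ₗ[ℤ] barChains G 1 :=
  Submodule.liftQ _ (barDiff G 1) (LinearMap.range_le_ker_iff.2 d_comp_d)

@[simp] lemma dbar_mk (x : barChains G 2) :
    dbar (Submodule.Quotient.mk x) = barDiff G 1 x := rfl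

lemma dbar_sc (g h : G) :
    dbar (sc g h) = Finsupp.single ![h] 1 - Finsupp.single ![g * h] 1
      + Finsupp.single ![g] 1 := by
  unfold sc
  rw [dbar_mk, barDiff_single₁]
  simp

noncomputable def jmap :
    ↥(LinearMap.ker (barDiff G 1)) →ₗ[ℤ] ↥(LinearMap.ker (dbar (G := G))) :=
  LinearMap.codRestrict _
    ((LinearMap.range (barDiff G 2)).mkQ.comp (LinearMap.ker (barDiff G 1)).subtype)
    (fun x => by
      simp only [LinearMap.mem_ker, LinearMap.comp_apply, Submodule.mkQ_apply,
        Submodule.subtype_apply, dbar_mk]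
      exact x.2)

lemma jmap_ker :
    LinearMap.ker (jmap (G := G)) =
      Submodule.comap (LinearMap.ker (barDiff G 1)).subtype
        (LinearMap.range (barDiff G 2)) := by
  ext x
  simp only [LinearMap.mem_ker, jmap, LinearMap.codRestrict, Submodule.mem_comap]
  constructor
  · intro hx
    have : Submodule.Quotient.mk (p := LinearMap.range (barDiff G 2)) x.1 = 0 := by
      exact congrArg Subtype.val hx
    exact (Submodule.Quotient.mk_eq_zero _).1 this
  · intro hx
    apply Subtype.ext
    simpa [Submodule.Quotient.mk_eq_zero] using hx

lemma jmap_surj : Function.Surjective (jmap (G := G)) := by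
  rintro ⟨m, hm⟩
  obtain ⟨z, hz⟩ := Submodule.Quotient.mk_surjective _ m
  have hzker : z ∈ LinearMap.ker (barDiff G 1) := by
    have : dbar (Submodule.Quotient.mk z : Mq G) = 0 := by rw [hz]; exact hm
    simpa using this
  exact ⟨⟨z, hzker⟩, Subtype.ext hz⟩

/-- the identification of `H₂` with the kernel of `dbar`. -/
noncomputable def h2Equiv : H2 G ≃ₗ[ℤ] ↥(LinearMap.ker (dbar (G := G))) :=
  (Submodule.quotEquivOfEq _ _ (jmap_ker (G := G)).symm).trans
    (LinearMap.quotKerEquivOfSurjective _ (jmap_surj (G := G)))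


section Presentation

variable {α : Type} (R : Subgroup (FreeGroup α)) [R.Normal]

/-- the quotient group of the presentation -/
abbrev Gq : Type := FreeGroup α ⧸ R

/-- the projection -/
noncomputable def pr : FreeGroup α →* Gq R := QuotientGroup.mk' R

lemma pr_mem (r : FreeGroup α) (hr : r ∈ R) : pr R r = 1 := by
  simpa [pr] using (QuotientGroup.eq_one_iff r).2 hr

/-- the lift of the projection to the extension -/
noncomputable def Φ : FreeGroup α →* Ext (Gq R) :=
  FreeGroup.lift fun x => ⟨pr R (FreeGroup.of x), 0⟩

lemma Φ_fst (w : FreeGroup α) : (Φ R w).g = pr R w := by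
  have h : extFst.comp (Φ R) = pr R := by
    apply FreeGroup.ext_hom
    intro a
    simp [Φ, extFst]
  exact DFunLike.congr_fun h w

/-- the second component of `Φ` -/
noncomputable def fm (w : FreeGroup α) : Mq (Gq R) := (Φ R w).m

lemma fm_mul (u v : FreeGroup α) :
    fm R (u * v) = fm R u + fm R v + sc (pr R u) (pr R v) := by
  unfold fm
  rw [map_mul, ext_mul_def]
  simp [Φ_fst]

lemma fm_one : fm R 1 = -sc 1 1 := by
  unfold fm
  rw [map_one]
  rfl

lemma fm_inv (v : FreeGroup α) :
    fm R v⁻¹ = -fm R v - sc (pr R v)⁻¹ (pr R v) - sc 1 1 := by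
  unfold fm
  rw [map_inv, ext_inv_def]
  simp [Φ_fst]

/-- the homomorphism `θ : R →* Mult (Mq)` -/
noncomputable def θ : ↥R →* Multiplicative (Mq (Gq R)) where
  toFun r := Multiplicative.ofAdd (fm R r + sc 1 1)
  map_one' := by
    simp only [OneMemClass.coe_one, fm_one]
    rw [neg_add_cancel]
    rfl
  map_mul' r r' := by
    have h : fm R (↑r * ↑r') = fm R r + fm R r' + sc 1 1 := by
      rw [fm_mul, pr_mem R r r.2, pr_mem R r' r'.2]
    simp only [Subgroup.coe_mul, h, ← ofAdd_add]
    congr 1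
    abel

/-- the "derivation-like" homomorphism measuring `dbar ∘ fm`. -/
noncomputable def homC1 : FreeGroup α →* Multiplicative (barChains (Gq R) 1) where
  toFun w := Multiplicative.ofAdd (dbar (fm R w) + Finsupp.single ![pr R w] 1)
  map_one' := by
    rw [fm_one, map_one]
    have h : dbar (sc (1 : Gq R) 1) = Finsupp.single ![(1 : Gq R)] 1 := by
      rw [dbar_sc, one_mul]
      abel
    rw [map_neg, h]
    rw [neg_add_cancel]
    rfl
  map_mul' u v := by
    refine congrArg Multiplicative.ofAdd ?_
    rw [fm_mul, map_add, map_add, dbar_sc, map_mul]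
    simp only [toAdd_ofAdd]
    abel

lemma dbar_theta (x : FreeGroup α) (hc : x ∈ commutator (FreeGroup α)) (hR : x ∈ R) :
    dbar (fm R x + sc 1 1) = 0 := by
  have h1 : homC1 R x = 1 := Abelianization.commutator_subset_ker (homC1 R) hc
  have h2 : dbar (fm R x) + Finsupp.single ![pr R x] 1 = 0 := h1
  rw [pr_mem R x hR] at h2
  have h3 : dbar (sc (1 : Gq R) 1) = Finsupp.single ![(1 : Gq R)] 1 := by
    rw [dbar_sc, one_mul]
    abel
  rw [map_add, h3]
  rw [eq_neg_of_add_eq_zero_left h2]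
  abel

/-- θ restricted to `R ⊓ [F,F]`, landing in the kernel of `dbar`. -/
noncomputable def θK : ↥(R ⊓ commutator (FreeGroup α)) →*
    Multiplicative ↥(LinearMap.ker (dbar (G := Gq R))) where
  toFun x := Multiplicative.ofAdd
    ⟨fm R x.1 + sc 1 1, dbar_theta R x.1 x.2.2 x.2.1⟩
  map_one' := by
    apply congrArg Multiplicative.ofAdd
    apply Subtype.ext
    show fm R 1 + sc 1 1 = 0
    rw [fm_one, neg_add_cancel]
  map_mul' x y := by
    apply congrArg Multiplicative.ofAdd
    apply Subtype.ext
    show fm R (x.1 * y.1) + sc 1 1 = (fm R x.1 + sc 1 1) + (fm R y.1 + sc 1 1)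
    rw [fm_mul, pr_mem R x.1 x.2.1, pr_mem R y.1 y.2.1]
    abel

/-- the Hopf homomorphism. -/
noncomputable def φmap : ↥(R ⊓ commutator (FreeGroup α)) →* Multiplicative (H2 (Gq R)) :=
  (AddEquiv.toMultiplicative (h2Equiv (G := Gq R)).symm.toAddEquiv).toMonoidHom.comp (θK R)

/-! ### Surjectivity -/

/-- a set-theoretic section of the projection -/
noncomputable def sig (x : Gq R) : FreeGroup α := Quotient.out x

lemma pr_sig (x : Gq R) : pr R (sig R x) = x := QuotientGroup.out_eq' x

lemma mem_of_pr {w : FreeGroup α} (h : pr R w = 1) : w ∈ R :=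
  (QuotientGroup.eq_one_iff w).1 h

/-- the factor set associated to the section `sig` -/
noncomputable def ρ (g : Fin 2 → Gq R) : ↥R :=
  ⟨sig R (g 0) * sig R (g 1) * (sig R (g 0 * g 1))⁻¹, by
    apply mem_of_pr
    simp only [map_mul, map_inv, pr_sig]
    group⟩

/-- `fm ∘ sig` -/
noncomputable def β (x : Gq R) : Mq (Gq R) := fm R (sig R x)

/-- the correction linear map -/
noncomputable def Bm : barChains (Gq R) 1 →ₗ[ℤ] Mq (Gq R) :=
  (Finsupp.lift (Mq (Gq R)) ℤ (Fin 1 → Gq R)) (fun c => β R (c 0))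

lemma Bm_single (h : Gq R) : Bm R (Finsupp.single ![h] 1) = β R h := by
  simp [Bm]

lemma theta_rho (g : Fin 2 → Gq R) :
    fm R (ρ R g).1 + sc 1 1 =
      Submodule.Quotient.mk (Finsupp.single g 1) + Bm R (barDiff (Gq R) 1 (Finsupp.single g 1)) := by
  have hmk : (Submodule.Quotient.mk (Finsupp.single g 1) : Mq (Gq R)) = sc (g 0) (g 1) := by
    rw [eta2 g]; rfl
  rw [hmk, barDiff_single₁, map_add, map_sub, Bm_single, Bm_single, Bm_single]
  show fm R (sig R (g 0) * sig R (g 1) * (sig R (g 0 * g 1))⁻¹) + sc 1 1 = _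
  rw [fm_mul, fm_mul, fm_inv]
  simp only [map_mul, map_inv, pr_sig]
  rw [sc_inv]
  unfold β
  abel

/-- the abelianization comparison linear map -/
noncomputable def ℓab : barChains (Gq R) 1 →ₗ[ℤ] Additive (Abelianization (FreeGroup α)) :=
  (Finsupp.lift (Additive (Abelianization (FreeGroup α))) ℤ (Fin 1 → Gq R))
    (fun c => Additive.ofMul (Abelianization.of (sig R (c 0))))

lemma ab_rho (g : Fin 2 → Gq R) :
    Additive.ofMul (Abelianization.of (ρ R g).1) = ℓab R (barDiff (Gq R) 1 (Finsupp.single g 1)) := by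
  rw [barDiff_single₁, map_add, map_sub]
  show Additive.ofMul (Abelianization.of (sig R (g 0) * sig R (g 1) * (sig R (g 0 * g 1))⁻¹)) = _
  simp only [map_mul, map_inv, ofMul_mul, ofMul_inv, ℓab, Finsupp.lift_apply,
    Finsupp.sum_single_index, zero_smul, one_smul, Matrix.cons_val_zero]
  abel

lemma exists_r (z : barChains (Gq R) 2) :
    ∃ r : ↥R,
      fm R r.1 + sc 1 1 = Submodule.Quotient.mk z + Bm R (barDiff (Gq R) 1 z) ∧
      Additive.ofMul (Abelianization.of r.1) = ℓab R (barDiff (Gq R) 1 z) := by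
  induction z using Finsupp.induction with
  | zero =>
    refine ⟨1, ?_, ?_⟩
    · simp only [OneMemClass.coe_one, fm_one, map_zero]
      rw [neg_add_cancel]
      simp
    · simp
  | single_add g n zr hg hn ih =>
    obtain ⟨r, hr1, hr2⟩ := ih
    have hsingle : Finsupp.single g n = n • Finsupp.single g (1 : ℤ) := by
      rw [Finsupp.smul_single, smul_eq_mul, mul_one]
    refine ⟨ρ R g ^ n * r, ?_, ?_⟩
    · have hθ := map_mul (θ R) (ρ R g ^ n) r
      have hθ2 : (θ R (ρ R g ^ n * r)).toAdd = n • (θ R (ρ R g)).toAdd + (θ R r).toAdd := by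
        rw [hθ, map_zpow]
        simp [toAdd_zpow]
      have hr : ∀ t : ↥R, (θ R t).toAdd = fm R t.1 + sc 1 1 := fun t => rfl
      rw [hr, hr, hr] at hθ2
      rw [hθ2, hr1, theta_rho, hsingle]
      simp only [map_add, map_smul, smul_add, Submodule.Quotient.mk_add, Submodule.Quotient.mk_smul]
      abel
    · have hA : Additive.ofMul (Abelianization.of ((ρ R g ^ n * r : ↥R) : FreeGroup α))
          = n • Additive.ofMul (Abelianization.of (ρ R g).1) + Additive.ofMul (Abelianization.of r.1) := by
        push_cast
        rw [map_mul, map_zpow, ofMul_mul, ofMul_zpow]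
      rw [hA, hr2, ab_rho, hsingle]
      simp only [map_add, map_smul]

lemma φmap_surjective : Function.Surjective (φmap R) := by
  intro y
  set m := h2Equiv (G := Gq R) y.toAdd with hm
  obtain ⟨z, hz⟩ := Submodule.Quotient.mk_surjective _ m.1
  have hdz : barDiff (Gq R) 1 z = 0 := by
    have : dbar (Submodule.Quotient.mk z : Mq (Gq R)) = 0 := by rw [hz]; exact m.2
    simpa using this
  obtain ⟨r, hr1, hr2⟩ := exists_r R z
  rw [hdz, map_zero, add_zero] at hr1
  rw [hdz, map_zero] at hr2
  have hcomm : r.1 ∈ commutator (FreeGroup α) := by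
    have : Abelianization.of r.1 = 1 := by
      have := hr2
      simpa using this
    exact (QuotientGroup.eq_one_iff r.1).1 this
  refine ⟨⟨r.1, ⟨r.2, hcomm⟩⟩, ?_⟩
  have hθK : θK R ⟨r.1, ⟨r.2, hcomm⟩⟩ = Multiplicative.ofAdd m := by
    apply congrArg Multiplicative.ofAdd
    apply Subtype.ext
    show fm R r.1 + sc 1 1 = m.1
    rw [hr1, hz]
  unfold φmap
  rw [MonoidHom.comp_apply, hθK]
  show Multiplicative.ofAdd ((h2Equiv (G := Gq R)).symm m) = y
  rw [hm, LinearEquiv.symm_apply_apply]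
  rfl


/-! ### The kernel -/

/-- `R` modulo `[F,R]` -/
abbrev Qr : Type :=
  ↥R ⧸ ((⁅(⊤ : Subgroup (FreeGroup α)), R⁆).subgroupOf R)

/-- projection to `Qr` -/
noncomputable def mkr : ↥R →* Qr R := QuotientGroup.mk' _

lemma mkr_eq_one_iff (t : ↥R) :
    mkr R t = 1 ↔ t ∈ (⁅(⊤ : Subgroup (FreeGroup α)), R⁆).subgroupOf R :=
  QuotientGroup.eq_one_iff t

lemma mkr_mul_comm (a b : ↥R) : mkr R (a * b) = mkr R (b * a) := by
  unfold mkr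
  rw [QuotientGroup.mk'_eq_mk']
  refine ⟨⁅b⁻¹, a⁻¹⁆, ?_, ?_⟩
  · rw [Subgroup.mem_subgroupOf]
    have hval : ((⁅b⁻¹, a⁻¹⁆ : ↥R) : FreeGroup α)
        = ⁅((b : FreeGroup α))⁻¹, ((a : FreeGroup α))⁻¹⁆ := by
      push_cast
      rfl
    rw [hval]
    exact Subgroup.commutator_mem_commutator (Subgroup.mem_top _) (R.inv_mem a.2)
  · apply Subtype.ext
    push_cast [commutatorElement_def]
    group

noncomputable instance : CommGroup (Qr R) :=
  { (inferInstance : Group (Qr R)) with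
    mul_comm := fun a b => by
      induction a using QuotientGroup.induction_on with
      | H a =>
      induction b using QuotientGroup.induction_on with
      | H b =>
      show mkr R a * mkr R b = mkr R b * mkr R a
      rw [← map_mul, ← map_mul, mkr_mul_comm] }

lemma mkr_conj (w : FreeGroup α) (r : ↥R)
    (hw : (w * r * w⁻¹ : FreeGroup α) ∈ R) :
    mkr R ⟨w * r * w⁻¹, hw⟩ = mkr R r := by
  unfold mkr
  rw [QuotientGroup.mk'_eq_mk']
  refine ⟨(⟨w * r * w⁻¹, hw⟩ : ↥R)⁻¹ * r, ?_, by group⟩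
  rw [Subgroup.mem_subgroupOf]
  have hval : (((⟨w * ↑r * w⁻¹, hw⟩ : ↥R)⁻¹ * r : ↥R) : FreeGroup α)
      = ⁅w, (r : FreeGroup α)⁻¹⁆ := by
    push_cast
    group
  rw [hval]
  exact Subgroup.commutator_mem_commutator (Subgroup.mem_top _) (R.inv_mem r.2)

/-- the comparison linear map to `Qr` -/
noncomputable def ψc : barChains (Gq R) 2 →ₗ[ℤ] Additive (Qr R) :=
  (Finsupp.lift (Additive (Qr R)) ℤ (Fin 2 → Gq R)) (fun g => Additive.ofMul (mkr R (ρ R g)))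

lemma ψc_single (g : Fin 2 → Gq R) :
    ψc R (Finsupp.single g 1) = Additive.ofMul (mkr R (ρ R g)) := by
  simp [ψc]

lemma rho_val (g : Fin 2 → Gq R) :
    ((ρ R g : ↥R) : FreeGroup α) = sig R (g 0) * sig R (g 1) * (sig R (g 0 * g 1))⁻¹ := rfl

lemma rho_identity (g h k : Gq R) :
    mkr R (ρ R ![g, h]) * mkr R (ρ R ![g * h, k]) =
      mkr R (ρ R ![h, k]) * mkr R (ρ R ![g, h * k]) := by
  have hconj : (sig R g * (ρ R ![h, k] : ↥R) * (sig R g)⁻¹ : FreeGroup α) ∈ R :=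
    Subgroup.Normal.conj_mem ‹R.Normal› _ (ρ R ![h, k]).2 _
  have h1 : mkr R (ρ R ![h, k]) = mkr R ⟨_, hconj⟩ := (mkr_conj R _ _ hconj).symm
  rw [h1, ← map_mul, ← map_mul]
  congr 1
  apply Subtype.ext
  push_cast [rho_val]
  rw [mul_assoc g h k]
  group

lemma ψc_d : (ψc R).comp (barDiff (Gq R) 2) = 0 := by
  refine Finsupp.lhom_ext fun g n => ?_
  have h1 : Finsupp.single g n = n • Finsupp.single g (1 : ℤ) := by
    rw [Finsupp.smul_single, smul_eq_mul, mul_one]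
  simp only [LinearMap.comp_apply, LinearMap.zero_apply, h1, map_smul]
  rw [barDiff_single₂, map_sub, map_add, map_sub, ψc_single, ψc_single, ψc_single, ψc_single]
  have hid := rho_identity R (g 0) (g 1) (g 2)
  have hid' : Additive.ofMul (mkr R (ρ R ![g 0, g 1]))
        + Additive.ofMul (mkr R (ρ R ![g 0 * g 1, g 2]))
      = Additive.ofMul (mkr R (ρ R ![g 1, g 2]))
        + Additive.ofMul (mkr R (ρ R ![g 0, g 1 * g 2])) := by
    rw [← ofMul_mul, ← ofMul_mul, hid]
  have hz : Additive.ofMul (mkr R (ρ R ![g 1, g 2]))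
      - Additive.ofMul (mkr R (ρ R ![g 0 * g 1, g 2]))
      + Additive.ofMul (mkr R (ρ R ![g 0, g 1 * g 2]))
      - Additive.ofMul (mkr R (ρ R ![g 0, g 1])) = 0 := by
    calc Additive.ofMul (mkr R (ρ R ![g 1, g 2]))
          - Additive.ofMul (mkr R (ρ R ![g 0 * g 1, g 2]))
          + Additive.ofMul (mkr R (ρ R ![g 0, g 1 * g 2]))
          - Additive.ofMul (mkr R (ρ R ![g 0, g 1]))
        = (Additive.ofMul (mkr R (ρ R ![g 1, g 2]))
            + Additive.ofMul (mkr R (ρ R ![g 0, g 1 * g 2])))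
          - (Additive.ofMul (mkr R (ρ R ![g 0, g 1]))
            + Additive.ofMul (mkr R (ρ R ![g 0 * g 1, g 2]))) := by abel
      _ = 0 := by rw [← hid', sub_self]
  rw [hz, smul_zero]

/-- induced map `Mq → Additive Qr` -/
noncomputable def ψm : Mq (Gq R) →ₗ[ℤ] Additive (Qr R) :=
  Submodule.liftQ _ (ψc R) (LinearMap.range_le_ker_iff.2 (ψc_d R))

lemma ψm_sc (g h : Gq R) : ψm R (sc g h) = Additive.ofMul (mkr R (ρ R ![g, h])) := by
  show ψm R (Submodule.Quotient.mk _) = _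
  rw [ψm, Submodule.liftQ_apply, ψc_single]

/-- the canonical element `w ⋅ σ(pr w)⁻¹` of `R` -/
noncomputable def Aelt (w : FreeGroup α) : ↥R :=
  ⟨w * (sig R (pr R w))⁻¹, mem_of_pr R (by simp [map_mul, map_inv, pr_sig])⟩

lemma Aelt_val (w : FreeGroup α) :
    ((Aelt R w : ↥R) : FreeGroup α) = w * (sig R (pr R w))⁻¹ := rfl

/-- the homomorphism measuring the difference between `ψm ∘ fm` and `Aelt` -/
noncomputable def uhom : FreeGroup α →* Qr R where
  toFun w := (ψm R (fm R w)).toMul * (mkr R (Aelt R w))⁻¹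
  map_one' := by
    have key : ρ R ![(1 : Gq R), 1] * Aelt R 1 = 1 := by
      apply Subtype.ext
      push_cast [rho_val, Aelt_val]
      simp only [Matrix.cons_val_zero, Matrix.cons_val_one, Matrix.head_cons, one_mul, map_one]
      group
    rw [fm_one, map_neg, ψm_sc, toMul_neg, toMul_ofMul, ← mul_inv_rev, inv_eq_one,
      ← map_mul, mkr_mul_comm, key, map_one]
  map_mul' u v := by
    have hconjmem : (sig R (pr R u) * (Aelt R v : FreeGroup α) * (sig R (pr R u))⁻¹ :
        FreeGroup α) ∈ R :=
      Subgroup.Normal.conj_mem ‹R.Normal› _ (Aelt R v).2 _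
    have hA : Aelt R (u * v) = Aelt R u * ⟨_, hconjmem⟩ * ρ R ![pr R u, pr R v] := by
      apply Subtype.ext
      push_cast [Aelt_val, rho_val]
      simp only [Matrix.cons_val_zero, Matrix.cons_val_one, Matrix.head_cons, map_mul]
      group
    have hmk : mkr R (Aelt R (u * v)) =
        mkr R (Aelt R u) * mkr R (Aelt R v) * mkr R (ρ R ![pr R u, pr R v]) := by
      rw [hA, map_mul, map_mul, mkr_conj R _ _ hconjmem]
    have hfm : ψm R (fm R (u * v)) =
        ψm R (fm R u) + ψm R (fm R v) + Additive.ofMul (mkr R (ρ R ![pr R u, pr R v])) := by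
      rw [fm_mul, map_add, map_add, ψm_sc]
    refine Additive.ofMul.injective ?_
    simp only [ofMul_mul, ofMul_inv, ofMul_toMul]
    rw [hfm, hmk]
    simp only [ofMul_mul]
    abel

lemma uhom_commutator {x : FreeGroup α} (hx : x ∈ commutator (FreeGroup α)) :
    uhom R x = 1 :=
  Abelianization.commutator_subset_ker (uhom R) hx

lemma φmap_eq_one_iff (x : ↥(R ⊓ commutator (FreeGroup α))) :
    φmap R x = 1 ↔ fm R x.1 + sc 1 1 = 0 := by
  unfold φmap
  rw [MonoidHom.comp_apply]
  set e := AddEquiv.toMultiplicative (h2Equiv (G := Gq R)).symm.toAddEquiv with he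
  constructor
  · intro h
    have h1 : θK R x = 1 := by
      apply e.injective
      rw [map_one]
      exact h
    have h2 : (θK R x).toAdd = 0 := by rw [h1]; rfl
    exact congrArg Subtype.val h2
  · intro hv
    have h1 : θK R x = 1 := by
      show Multiplicative.ofAdd (⟨fm R x.1 + sc 1 1, _⟩ : ↥(LinearMap.ker (dbar (G := Gq R)))) = 1
      have : (⟨fm R x.1 + sc 1 1, dbar_theta R x.1 x.2.2 x.2.1⟩ :
          ↥(LinearMap.ker (dbar (G := Gq R)))) = 0 := Subtype.ext hv
      rw [this]
      rfl
    rw [show (e.toMonoidHom : Multiplicative ↥(LinearMap.ker (dbar (G := Gq R))) →*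
        Multiplicative (H2 (Gq R))) (θK R x) = e (θK R x) from rfl, h1, map_one]

lemma φmap_ker :
    MonoidHom.ker (φmap R) =
      (⁅(⊤ : Subgroup (FreeGroup α)), R⁆).subgroupOf (R ⊓ commutator (FreeGroup α)) := by
  ext x
  rw [MonoidHom.mem_ker, φmap_eq_one_iff, Subgroup.mem_subgroupOf]
  constructor
  · intro hv
    have hu : uhom R x.1 = 1 := uhom_commutator R x.2.2
    have hu' : (ψm R (fm R x.1)).toMul = mkr R (Aelt R x.1) := by
      have h1 : (ψm R (fm R x.1)).toMul * (mkr R (Aelt R x.1))⁻¹ = 1 := hu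
      rwa [mul_inv_eq_one] at h1
    have hψ : ψm R (fm R x.1) = -ψm R (sc 1 1) := by
      have := congrArg (ψm R) hv
      rw [map_add, map_zero] at this
      exact eq_neg_of_add_eq_zero_left this
    have hkey : mkr R (Aelt R x.1 * ρ R ![1, 1]) = 1 := by
      rw [map_mul, ← hu', hψ, ψm_sc, toMul_neg, toMul_ofMul, inv_mul_cancel]
    have hmem := (mkr_eq_one_iff R _).1 hkey
    rw [Subgroup.mem_subgroupOf] at hmem
    have hval : ((Aelt R x.1 * ρ R ![1, 1] : ↥R) : FreeGroup α) = x.1 := by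
      push_cast [Aelt_val, rho_val]
      simp only [Matrix.cons_val_zero, Matrix.cons_val_one, Matrix.head_cons, one_mul]
      rw [pr_mem R x.1 x.2.1]
      group
    rwa [hval] at hmem
  · intro hx
    have hT : ⁅(⊤ : Subgroup (FreeGroup α)), R⁆ ≤
        Subgroup.map R.subtype (MonoidHom.ker (θ R)) := by
      rw [Subgroup.commutator_le]
      intro f _ r hr
      have hmem : ⁅f, r⁆ ∈ R := by
        rw [commutatorElement_def]
        exact mul_mem (Subgroup.Normal.conj_mem ‹R.Normal› r hr f) (R.inv_mem hr)
      refine ⟨⟨⁅f, r⁆, hmem⟩, ?_, rfl⟩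
      show θ R ⟨⁅f, r⁆, hmem⟩ = 1
      have hone : Φ R ⁅f, r⁆ = 1 := by
        rw [map_commutatorElement]
        exact commutatorElement_eq_one_iff_commute.2
          (ext_central' (by rw [Φ_fst, pr_mem R r hr]))
      have hfm : fm R ⁅f, r⁆ = -sc 1 1 := by
        unfold fm
        rw [hone]
        rfl
      show Multiplicative.ofAdd (fm R ⁅f, r⁆ + sc 1 1) = 1
      rw [hfm, neg_add_cancel]
      rfl
    obtain ⟨y, hy, hyval⟩ := hT hx
    have hyx : y = ⟨x.1, x.2.1⟩ := Subtype.ext hyval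
    rw [hyx] at hy
    have h1 : Multiplicative.ofAdd (fm R x.1 + sc 1 1) = Multiplicative.ofAdd (0 : Mq (Gq R)) := hy
    exact Multiplicative.ofAdd.injective h1

end Presentation
end Hopf

/-- **Hopf's formula.**  Let `G` be a group with a presentation `G = F/R`, `F` a free group.
Then there is a natural isomorphism `H₂(G, ℤ) ≅ (R ∩ [F,F]) / [F,R]`, where `[F,R]` is the
subgroup generated by the commutators `f r f⁻¹ r⁻¹` with `f ∈ F`, `r ∈ R`.
(The isomorphism is expressed by a surjective homomorphism `R ∩ [F,F] → H₂(G,ℤ)` whose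
kernel is exactly `[F,R]`.) -/
theorem hopf_formula (α : Type) (R : Subgroup (FreeGroup α)) [R.Normal] :
    ∃ φ : ↥(R ⊓ commutator (FreeGroup α)) →* Multiplicative (H2 (FreeGroup α ⧸ R)),
      Function.Surjective φ ∧
        MonoidHom.ker φ =
          (⁅(⊤ : Subgroup (FreeGroup α)), R⁆).subgroupOf (R ⊓ commutator (FreeGroup α)) := by
  exact ⟨Hopf.φmap R, Hopf.φmap_surjective R, Hopf.φmap_ker R⟩
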